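/- Let G be a group and let a_1, a_2, a_3, a_4, b_1, b_2, b_3, b_4, b be elements of G. Assume: (i) a_1 a_3 = a_3 a_1 and a_2 a_4 = a_4 a_2; (ii) for each i taken modulo 4, b a_i b_i = a_i b_i a_{i+1} = b_i a_{i+1} b = a_{i+1} b a_i; and (iii) the product z = a_1² b_1 a_2² b_2 a_3² b_3 a_4² b_4 is central in G. Then the 12-tuple (a_1, a_1, b_1, a_2, a_2, b_2, a_3, a_3, b_3, a_4, a_4, b_4) is Hurwitz equivalent to the 12-tuple (a_1, a_3, b, a_2, a_4, b, a_1, a_3, b, a_2, a_4, b). -/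

import Mathlib

/-- An elementary Hurwitz move on a tuple of elements of a group: replace an adjacent
pair `(a, b)` by `(a * b * a⁻¹, a)` or by `(b, b⁻¹ * a * b)`. -/
inductive HurwitzMove {G : Type*} [Group G] : List G → List G → Prop
  | slideLeft (l₁ l₂ : List G) (a b : G) :
      HurwitzMove (l₁ ++ a :: b :: l₂) (l₁ ++ (a * b * a⁻¹) :: a :: l₂)
  | slideRight (l₁ l₂ : List G) (a b : G) :
      HurwitzMove (l₁ ++ a :: b :: l₂) (l₁ ++ b :: (b⁻¹ * a * b) :: l₂)

/-- Two tuples are Hurwitz equivalent if one is obtained from the other by a finite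
sequence of elementary Hurwitz moves. -/
def HurwitzEquiv {G : Type*} [Group G] : List G → List G → Prop :=
  Relation.ReflTransGen HurwitzMove

section aux
variable {G : Type*} [Group G]

lemma HurwitzMove.prod_eq' {l l' : List G} (h : HurwitzMove l l') : l.prod = l'.prod := by
  cases h <;> simp <;> group

lemma HurwitzEquiv.prod_eq' {l l' : List G} (h : HurwitzEquiv l l') : l.prod = l'.prod := by
  induction h with
  | refl => rfl
  | tail _ hm ih => exact ih.trans hm.prod_eq'

lemma HurwitzMove.append_left' {l l' : List G} (c : List G) (h : HurwitzMove l l') :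
    HurwitzMove (c ++ l) (c ++ l') := by
  cases h with
  | slideLeft l₁ l₂ a b =>
      simpa [List.append_assoc] using HurwitzMove.slideLeft (c ++ l₁) l₂ a b
  | slideRight l₁ l₂ a b =>
      simpa [List.append_assoc] using HurwitzMove.slideRight (c ++ l₁) l₂ a b

lemma HurwitzEquiv.append_left' {l l' : List G} (c : List G) (h : HurwitzEquiv l l') :
    HurwitzEquiv (c ++ l) (c ++ l') := by
  induction h with
  | refl => exact Relation.ReflTransGen.refl
  | tail _ hm ih => exact ih.tail (hm.append_left' c)

lemma pairL (l₁ l₂ : List G) (a b c : G) (h : c = a * b * a⁻¹) :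
    HurwitzEquiv (l₁ ++ a :: b :: l₂) (l₁ ++ c :: a :: l₂) := by
  subst h
  exact Relation.ReflTransGen.single (HurwitzMove.slideLeft l₁ l₂ a b)

lemma rot_aux (x : G) (l : List G) :
    HurwitzEquiv (x :: l) (l ++ [l.prod⁻¹ * x * l.prod]) := by
  induction l generalizing x with
  | nil => simpa [HurwitzEquiv] using (Relation.ReflTransGen.refl : HurwitzEquiv [x] [x])
  | cons y t ih =>
    have m : HurwitzMove (x :: y :: t) (y :: (y⁻¹ * x * y) :: t) := by
      simpa using HurwitzMove.slideRight [] t x y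
    refine (Relation.ReflTransGen.single m).trans ?_
    have h2 := HurwitzEquiv.append_left' [y] (ih (y⁻¹ * x * y))
    simpa [mul_assoc, HurwitzEquiv] using h2

lemma rot {z : G} (hz : z ∈ Subgroup.center G) (x : G) (l : List G)
    (hp : x * l.prod = z) : HurwitzEquiv (x :: l) (l ++ [x]) := by
  have hl : l.prod = x⁻¹ * z := by rw [← hp]; group
  have hxz : x * z = z * x := Subgroup.mem_center_iff.mp hz x
  have h2 : z⁻¹ * (x * z) = x := by rw [hxz]; group
  have key : l.prod⁻¹ * x * l.prod = x := by
    rw [hl, show (x⁻¹ * z)⁻¹ * x * (x⁻¹ * z) = z⁻¹ * (x * z) from by group]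
    exact h2
  have h := rot_aux x l
  rwa [key] at h

end aux

/-- The algebraic content of the identification of the 4-holed torus relation
`N₄ = ∂₄` with Korkmaz–Ozbagci's relation `(a₁ a₃ b a₂ a₄ b)² = ∂₄`. -/
theorem hurwitzEquiv_fourHoled_relation {G : Type*} [Group G]
    (a₁ a₂ a₃ a₄ b₁ b₂ b₃ b₄ b : G)
    (hc13 : a₁ * a₃ = a₃ * a₁) (hc24 : a₂ * a₄ = a₄ * a₂)
    (h1 : b * a₁ * b₁ = a₁ * b₁ * a₂ ∧ a₁ * b₁ * a₂ = b₁ * a₂ * b ∧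
      b₁ * a₂ * b = a₂ * b * a₁)
    (h2 : b * a₂ * b₂ = a₂ * b₂ * a₃ ∧ a₂ * b₂ * a₃ = b₂ * a₃ * b ∧
      b₂ * a₃ * b = a₃ * b * a₂)
    (h3 : b * a₃ * b₃ = a₃ * b₃ * a₄ ∧ a₃ * b₃ * a₄ = b₃ * a₄ * b ∧
      b₃ * a₄ * b = a₄ * b * a₃)
    (h4 : b * a₄ * b₄ = a₄ * b₄ * a₁ ∧ a₄ * b₄ * a₁ = b₄ * a₁ * b ∧
      b₄ * a₁ * b = a₁ * b * a₄)
    (hz : a₁ ^ 2 * b₁ * a₂ ^ 2 * b₂ * a₃ ^ 2 * b₃ * a₄ ^ 2 * b₄ ∈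
      Subgroup.center G) :
    HurwitzEquiv
      [a₁, a₁, b₁, a₂, a₂, b₂, a₃, a₃, b₃, a₄, a₄, b₄]
      [a₁, a₃, b, a₂, a₄, b, a₁, a₃, b, a₂, a₄, b] := by
  -- solved forms for a_{i+1}
  have hA1 : a₂ = b₁⁻¹ * a₁⁻¹ * (b * a₁ * b₁) := by rw [h1.1]; group
  have hA2 : a₃ = b₂⁻¹ * a₂⁻¹ * (b * a₂ * b₂) := by rw [h2.1]; group
  have hA3 : a₄ = b₃⁻¹ * a₃⁻¹ * (b * a₃ * b₃) := by rw [h3.1]; group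
  have hA4 : a₁ = b₄⁻¹ * a₄⁻¹ * (b * a₄ * b₄) := by rw [h4.1]; group
  -- conjugation identities for the left-to-right sweep
  have c11 : a₁⁻¹ * b * a₁ = b₁ * a₂ * b₁⁻¹ := by rw [hA1]; group
  have c12 : a₂⁻¹ * b * a₂ = b₂ * a₃ * b₂⁻¹ := by rw [hA2]; group
  have c13 : a₃⁻¹ * b * a₃ = b₃ * a₄ * b₃⁻¹ := by rw [hA3]; group
  have c14 : a₄⁻¹ * b * a₄ = b₄ * a₁ * b₄⁻¹ := by rw [hA4]; group
  -- combined relations and solved forms for b_i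
  have r1 : b * a₁ * b₁ = a₂ * b * a₁ := h1.1.trans (h1.2.1.trans h1.2.2)
  have r2 : b * a₂ * b₂ = a₃ * b * a₂ := h2.1.trans (h2.2.1.trans h2.2.2)
  have r3 : b * a₃ * b₃ = a₄ * b * a₃ := h3.1.trans (h3.2.1.trans h3.2.2)
  have r4 : b * a₄ * b₄ = a₁ * b * a₄ := h4.1.trans (h4.2.1.trans h4.2.2)
  have hB1 : b₁ = a₁⁻¹ * b⁻¹ * (a₂ * b * a₁) := by rw [← r1]; group
  have hB2 : b₂ = a₂⁻¹ * b⁻¹ * (a₃ * b * a₂) := by rw [← r2]; group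
  have hB3 : b₃ = a₃⁻¹ * b⁻¹ * (a₄ * b * a₃) := by rw [← r3]; group
  have hB4 : b₄ = a₄⁻¹ * b⁻¹ * (a₁ * b * a₄) := by rw [← r4]; group
  have c41 : b⁻¹ * a₂ * b = a₁ * b₁ * a₁⁻¹ := by rw [hB1]; group
  have c42 : b⁻¹ * a₃ * b = a₂ * b₂ * a₂⁻¹ := by rw [hB2]; group
  have c43 : b⁻¹ * a₄ * b = a₃ * b₃ * a₃⁻¹ := by rw [hB3]; group
  have c44 : b⁻¹ * a₁ * b = a₄ * b₄ * a₄⁻¹ := by rw [hB4]; group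
  -- commuting swaps
  have sw13 : a₁ = a₃ * a₁ * a₃⁻¹ := by rw [← hc13]; group
  have sw24 : a₂ = a₄ * a₂ * a₄⁻¹ := by rw [← hc24]; group
  set z := a₁ ^ 2 * b₁ * a₂ ^ 2 * b₂ * a₃ ^ 2 * b₃ * a₄ ^ 2 * b₄ with hzdef
  have hS0 : ([a₁, a₁, b₁, a₂, a₂, b₂, a₃, a₃, b₃, a₄, a₄, b₄] : List G).prod = z := by
    simp [hzdef, pow_two, mul_assoc]
  -- Step 0: rotate left once
  have e0 : HurwitzEquiv [a₁, a₁, b₁, a₂, a₂, b₂, a₃, a₃, b₃, a₄, a₄, b₄]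
      [a₁, b₁, a₂, a₂, b₂, a₃, a₃, b₃, a₄, a₄, b₄, a₁] :=
    rot hz a₁ [a₁, b₁, a₂, a₂, b₂, a₃, a₃, b₃, a₄, a₄, b₄]
      (by simpa using hS0)
  -- Step B: sweep to normal form [b,a₁,b₁,b,a₂,b₂,b,a₃,b₃,b,a₄,b₄]
  have e1 := pairL [a₁] [a₂, b₂, a₃, a₃, b₃, a₄, a₄, b₄, a₁] b₁ a₂ (a₁⁻¹ * b * a₁) c11
  have e2 := pairL ([] : List G) [b₁, a₂, b₂, a₃, a₃, b₃, a₄, a₄, b₄, a₁]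
    a₁ (a₁⁻¹ * b * a₁) b (by group)
  have e3 := pairL [b, a₁, b₁, a₂] [a₃, b₃, a₄, a₄, b₄, a₁] b₂ a₃ (a₂⁻¹ * b * a₂) c12
  have e4 := pairL [b, a₁, b₁] [b₂, a₃, b₃, a₄, a₄, b₄, a₁]
    a₂ (a₂⁻¹ * b * a₂) b (by group)
  have e5 := pairL [b, a₁, b₁, b, a₂, b₂, a₃] [a₄, b₄, a₁] b₃ a₄ (a₃⁻¹ * b * a₃) c13
  have e6 := pairL [b, a₁, b₁, b, a₂, b₂] [b₃, a₄, b₄, a₁]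
    a₃ (a₃⁻¹ * b * a₃) b (by group)
  have e7 := pairL [b, a₁, b₁, b, a₂, b₂, b, a₃, b₃, a₄] ([] : List G)
    b₄ a₁ (a₄⁻¹ * b * a₄) c14
  have e8 := pairL [b, a₁, b₁, b, a₂, b₂, b, a₃, b₃] [b₄]
    a₄ (a₄⁻¹ * b * a₄) b (by group)
  -- Step C: from normal form towards (a₂,b,a₁,a₃,b,a₂,a₄,b,a₃,a₁,b,a₄)
  have e9 := pairL [b] [b, a₂, b₂, b, a₃, b₃, b, a₄, b₄] a₁ b₁ (b⁻¹ * a₂ * b) c41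
  have e10 := pairL ([] : List G) [a₁, b, a₂, b₂, b, a₃, b₃, b, a₄, b₄]
    b (b⁻¹ * a₂ * b) a₂ (by group)
  have e11 := pairL [a₂, b, a₁, b] [b, a₃, b₃, b, a₄, b₄] a₂ b₂ (b⁻¹ * a₃ * b) c42
  have e12 := pairL [a₂, b, a₁] [a₂, b, a₃, b₃, b, a₄, b₄]
    b (b⁻¹ * a₃ * b) a₃ (by group)
  have e13 := pairL [a₂, b, a₁, a₃, b, a₂, b] [b, a₄, b₄] a₃ b₃ (b⁻¹ * a₄ * b) c43
  have e14 := pairL [a₂, b, a₁, a₃, b, a₂] [a₃, b, a₄, b₄]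
    b (b⁻¹ * a₄ * b) a₄ (by group)
  have e15 := pairL [a₂, b, a₁, a₃, b, a₂, a₄, b, a₃, b] ([] : List G)
    a₄ b₄ (b⁻¹ * a₁ * b) c44
  have e16 := pairL [a₂, b, a₁, a₃, b, a₂, a₄, b, a₃] [a₄]
    b (b⁻¹ * a₁ * b) a₁ (by group)
  -- swap (a₃,a₁) at positions 8,9
  have e17 := pairL [a₂, b, a₁, a₃, b, a₂, a₄, b] [b, a₄] a₃ a₁ a₁ sw13
  -- accumulate
  have E : HurwitzEquiv [a₁, a₁, b₁, a₂, a₂, b₂, a₃, a₃, b₃, a₄, a₄, b₄]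
      [a₂, b, a₁, a₃, b, a₂, a₄, b, a₁, a₃, b, a₄] :=
    (((((((((((((((((e0.trans e1).trans e2).trans e3).trans e4).trans e5).trans
      e6).trans e7).trans e8).trans e9).trans e10).trans e11).trans e12).trans
      e13).trans e14).trans e15).trans e16).trans e17)
  -- rotate left once
  have hM : ([a₂, b, a₁, a₃, b, a₂, a₄, b, a₁, a₃, b, a₄] : List G).prod = z :=
    E.prod_eq'.symm.trans hS0
  have e18 : HurwitzEquiv [a₂, b, a₁, a₃, b, a₂, a₄, b, a₁, a₃, b, a₄]
      [b, a₁, a₃, b, a₂, a₄, b, a₁, a₃, b, a₄, a₂] :=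
    rot hz a₂ [b, a₁, a₃, b, a₂, a₄, b, a₁, a₃, b, a₄] (by simpa using hM)
  -- swap (a₄,a₂) at positions 10,11
  have e19 := pairL [b, a₁, a₃, b, a₂, a₄, b, a₁, a₃, b] ([] : List G) a₄ a₂ a₂ sw24
  have E2 : HurwitzEquiv [a₁, a₁, b₁, a₂, a₂, b₂, a₃, a₃, b₃, a₄, a₄, b₄]
      [b, a₁, a₃, b, a₂, a₄, b, a₁, a₃, b, a₂, a₄] :=
    (E.trans e18).trans e19
  -- final rotation
  have hM2 : ([b, a₁, a₃, b, a₂, a₄, b, a₁, a₃, b, a₂, a₄] : List G).prod = z :=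
    E2.prod_eq'.symm.trans hS0
  have e20 : HurwitzEquiv [b, a₁, a₃, b, a₂, a₄, b, a₁, a₃, b, a₂, a₄]
      [a₁, a₃, b, a₂, a₄, b, a₁, a₃, b, a₂, a₄, b] :=
    rot hz b [a₁, a₃, b, a₂, a₄, b, a₁, a₃, b, a₂, a₄] (by simpa using hM2)
  exact E2.trans e20
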